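/- For any vector v ∈ ℂ^M and any Hermitian Toeplitz matrix T(f) whose first column is f ∈ ℂ^M (with f_0 real), the quadratic form v^H T(f) v equals the real part of the inner product ⟨a_v, f⟩ = Re(a_v^H f), where a_v is the autocorrelation vector of v defined by [a_v]_0 = ‖v‖² and [a_v]_k = 2 Σ_{i=0}^{M-1-k} v_{i+k} conj(v_i) for 1 ≤ k ≤ M-1. -/
import Mathlib

open scoped BigOperators Matrix ComplexConjugate
open Finset

/-- Hermitian Toeplitz matrix whose first column is `f`. -/
noncomputable def toep (M : ℕ) (f : Fin M → ℂ) : Matrix (Fin M) (Fin M) ℂ :=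
  fun r c =>
    if h : (c : ℕ) ≤ (r : ℕ) then
      f ⟨(r : ℕ) - (c : ℕ), Nat.lt_of_le_of_lt (Nat.sub_le _ _) r.isLt⟩
    else
      conj (f ⟨(c : ℕ) - (r : ℕ), Nat.lt_of_le_of_lt (Nat.sub_le _ _) c.isLt⟩)

/-- Autocorrelation vector of `v`. -/
noncomputable def autocorr (M : ℕ) (v : Fin M → ℂ) : Fin M → ℂ :=
  fun k =>
    if (k : ℕ) = 0 then ∑ i, v i * conj (v i)
    else 2 * ∑ i : Fin M,
      if h : (i : ℕ) + (k : ℕ) < M then v ⟨(i : ℕ) + (k : ℕ), h⟩ * conj (v i) else 0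

/-- triangle reindex lemma -/
lemma tri (M : ℕ) (F : ℕ → ℕ → ℂ) (hF : ∀ k i, M ≤ i + k → F k i = 0) :
    ∑ r ∈ range M, ∑ c ∈ range M, (if c < r then F (r - c) c else 0)
  = ∑ k ∈ range M, ∑ i ∈ range M, (if 1 ≤ k then F k i else 0) := by
  rw [← Finset.sum_product', ← Finset.sum_product']
  rw [Finset.sum_ite, Finset.sum_const_zero, add_zero]
  rw [Finset.sum_ite, Finset.sum_const_zero, add_zero]
  have hsub : (Finset.filter (fun p : ℕ × ℕ => 1 ≤ p.1 ∧ p.1 + p.2 < M)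
        ((range M) ×ˢ (range M)))
      ⊆ Finset.filter (fun p : ℕ × ℕ => 1 ≤ p.1) ((range M) ×ˢ (range M)) := by
    intro p hp
    simp only [Finset.mem_filter] at hp ⊢
    exact ⟨hp.1, hp.2.1⟩
  have hvan : ∀ q ∈ Finset.filter (fun p : ℕ × ℕ => 1 ≤ p.1) ((range M) ×ˢ (range M)),
      q ∉ (Finset.filter (fun p : ℕ × ℕ => 1 ≤ p.1 ∧ p.1 + p.2 < M)
        ((range M) ×ˢ (range M))) → F q.1 q.2 = 0 := by
    intro q hq hq'
    simp only [Finset.mem_filter, Finset.mem_product, Finset.mem_range] at hq hq'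
    exact hF _ _ (by omega)
  rw [← Finset.sum_subset hsub hvan]
  refine Finset.sum_nbij' (fun p => (p.1 - p.2, p.2)) (fun q => (q.2 + q.1, q.2))
      ?_ ?_ ?_ ?_ ?_
  · rintro ⟨a, b⟩ hp
    simp only [Finset.mem_filter, Finset.mem_product, Finset.mem_range] at hp ⊢
    omega
  · rintro ⟨a, b⟩ hq
    simp only [Finset.mem_filter, Finset.mem_product, Finset.mem_range] at hq ⊢
    omega
  · rintro ⟨a, b⟩ hp
    simp only [Finset.mem_filter, Finset.mem_product, Finset.mem_range] at hp
    have h1 : b + (a - b) = a := by omega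
    simp [h1]
  · rintro ⟨a, b⟩ hq
    simp only [Finset.mem_filter, Finset.mem_product, Finset.mem_range] at hq
    have h1 : b + a - b = a := by omega
    simp [h1]
  · rintro ⟨a, b⟩ hp; rfl

/-- `v^H T(f) v = Re ⟨a_v, f⟩`. -/
theorem stmt0 (M : ℕ) (v f : Fin M → ℂ) (h0 : ∀ hM : 0 < M, (f ⟨0, hM⟩).im = 0) :
    star v ⬝ᵥ (toep M f).mulVec v = ((star (autocorr M v) ⬝ᵥ f).re : ℂ) := by
  classical
  set w : ℕ → ℂ := fun n => if h : n < M then v ⟨n, h⟩ else 0 with hwdef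
  set g : ℕ → ℂ := fun n => if h : n < M then f ⟨n, h⟩ else 0 with hgdef
  have hw : ∀ r : Fin M, v r = w (r : ℕ) := by
    intro r; simp [hwdef, r.isLt]
  have hg0 : conj (g 0) = g 0 := by
    simp only [hgdef]
    split
    · next h => rw [Complex.conj_eq_iff_im]; exact h0 h
    · simp
  have hwz : ∀ n, M ≤ n → w n = 0 := by
    intro n hn; simp only [hwdef]; rw [dif_neg (by omega)]
  -- LHS as a double range sum
  have hL : star v ⬝ᵥ (toep M f).mulVec v
      = ∑ r ∈ range M, ∑ c ∈ range M,
          conj (w r) * ((if c ≤ r then g (r - c) else conj (g (c - r))) * w c) := by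
    rw [dotProduct]
    rw [← Fin.sum_univ_eq_sum_range (fun r => ∑ c ∈ range M,
          conj (w r) * ((if c ≤ r then g (r - c) else conj (g (c - r))) * w c)) M]
    refine Finset.sum_congr rfl fun r _ => ?_
    simp only [Matrix.mulVec, dotProduct]
    rw [← Fin.sum_univ_eq_sum_range (fun c =>
          conj (w (r:ℕ)) * ((if c ≤ (r:ℕ) then g ((r:ℕ) - c) else conj (g (c - (r:ℕ)))) * w c)) M]
    rw [Finset.mul_sum]
    refine Finset.sum_congr rfl fun c _ => ?_
    simp only [Pi.star_apply, Complex.star_def, toep, hw]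
    split
    · next h =>
      have hlt := Nat.lt_of_le_of_lt (Nat.sub_le (r:ℕ) (c:ℕ)) r.isLt
      have hgv : g ((r:ℕ) - (c:ℕ))
          = f ⟨(r:ℕ) - (c:ℕ), Nat.lt_of_le_of_lt (Nat.sub_le _ _) r.isLt⟩ := by
        simp only [hgdef]; rw [dif_pos hlt]
      rw [hgv]
    · next h =>
      have hlt := Nat.lt_of_le_of_lt (Nat.sub_le (c:ℕ) (r:ℕ)) c.isLt
      have hgv : g ((c:ℕ) - (r:ℕ))
          = f ⟨(c:ℕ) - (r:ℕ), Nat.lt_of_le_of_lt (Nat.sub_le _ _) c.isLt⟩ := by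
        simp only [hgdef]; rw [dif_pos hlt]
      rw [hgv]
  -- autocorr as range sums
  set A : ℕ → ℂ := fun k => if k = 0 then ∑ i ∈ range M, w i * conj (w i)
      else 2 * ∑ i ∈ range M, w (i + k) * conj (w i) with hAdef
  have hA : ∀ k : Fin M, autocorr M v k = A (k : ℕ) := by
    intro k
    simp only [autocorr, hAdef]
    split
    · next h =>
      rw [← Fin.sum_univ_eq_sum_range (fun i => w i * conj (w i)) M]
      exact Finset.sum_congr rfl fun i _ => by rw [hw i]
    · next h =>
      congr 1
      rw [← Fin.sum_univ_eq_sum_range (fun i => w (i + (k:ℕ)) * conj (w i)) M]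
      refine Finset.sum_congr rfl fun i _ => ?_
      split
      · next hik => rw [hw i]; congr 2; simp [hwdef, hik]
      · next hik => rw [hwz _ (by omega), zero_mul]
  set X : ℂ := ∑ k ∈ range M, conj (A k) * g k with hXdef
  have hR : star (autocorr M v) ⬝ᵥ f = X := by
    rw [dotProduct, hXdef]
    rw [← Fin.sum_univ_eq_sum_range (fun k => conj (A k) * g k) M]
    refine Finset.sum_congr rfl fun k _ => ?_
    have hgk : f k = g (k : ℕ) := by simp [hgdef, k.isLt]
    simp only [Pi.star_apply, Complex.star_def, hA, hgk]
  rw [hL, hR]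
  set D : ℂ := ∑ r ∈ range M, conj (w r) * (g 0 * w r) with hDdef
  have pull : ∀ (c : Prop) [Decidable c] (t : ℕ → ℂ),
      (∑ i ∈ range M, if c then t i else 0) = if c then ∑ i ∈ range M, t i else 0 := by
    intro c _ t; split <;> simp
  have key : 2 * (∑ r ∈ range M, ∑ c ∈ range M,
        conj (w r) * ((if c ≤ r then g (r - c) else conj (g (c - r))) * w c))
      = X + conj X := by
    have hsplit : ∀ r ∈ range M, ∀ c ∈ range M,
        conj (w r) * ((if c ≤ r then g (r - c) else conj (g (c - r))) * w c)
        = (if c = r then conj (w r) * (g 0 * w r) else 0)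
          + ((if c < r then conj (w (c + (r - c))) * (g (r - c) * w c) else 0)
          + (if r < c then conj (w r) * (conj (g (c - r)) * w (r + (c - r))) else 0)) := by
      intro r _ c _
      rcases lt_trichotomy c r with h | h | h
      · rw [if_pos h.le, if_neg (by omega), if_pos h, if_neg (by omega)]
        have h1 : c + (r - c) = r := by omega
        rw [h1]; ring
      · subst h
        rw [if_pos le_rfl, if_pos rfl, if_neg (lt_irrefl _), if_neg (lt_irrefl _)]
        simp [Nat.sub_self]
      · rw [if_neg (by omega), if_neg (by omega), if_neg (by omega), if_pos h]
        have h1 : r + (c - r) = c := by omega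
        rw [h1]; ring
    have hSL : (∑ r ∈ range M, ∑ c ∈ range M,
          if c < r then conj (w (c + (r - c))) * (g (r - c) * w c) else 0)
        = ∑ k ∈ range M, ∑ i ∈ range M,
            if 1 ≤ k then conj (w (i + k)) * (g k * w i) else 0 :=
      tri M (fun k i => conj (w (i + k)) * (g k * w i))
        (fun k i h => by
          show conj (w (i + k)) * (g k * w i) = 0
          rw [hwz _ (by omega), map_zero, zero_mul])
    have hSU : (∑ r ∈ range M, ∑ c ∈ range M,
          if r < c then conj (w r) * (conj (g (c - r)) * w (r + (c - r))) else 0)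
        = ∑ k ∈ range M, ∑ i ∈ range M,
            if 1 ≤ k then conj (w i) * (conj (g k) * w (i + k)) else 0 := by
      rw [Finset.sum_comm]
      exact tri M (fun k i => conj (w i) * (conj (g k) * w (i + k)))
        (fun k i h => by
          show conj (w i) * (conj (g k) * w (i + k)) = 0
          rw [hwz (i + k) (by omega), mul_zero, mul_zero])
    have step1 : (∑ r ∈ range M, ∑ c ∈ range M,
          conj (w r) * ((if c ≤ r then g (r - c) else conj (g (c - r))) * w c))
        = D + ((∑ k ∈ range M, if 1 ≤ k then
              ∑ i ∈ range M, conj (w (i + k)) * (g k * w i) else 0)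
          + (∑ k ∈ range M, if 1 ≤ k then
              ∑ i ∈ range M, conj (w i) * (conj (g k) * w (i + k)) else 0)) := by
      rw [Finset.sum_congr rfl (fun r hr => Finset.sum_congr rfl (hsplit r hr))]
      simp only [Finset.sum_add_distrib]
      rw [hSL, hSU]
      simp only [pull]
      congr 1
      refine Finset.sum_congr rfl fun r hr => ?_
      rw [Finset.sum_ite_eq' (range M) r (fun _ => conj (w r) * (g 0 * w r))]
      exact if_pos hr
    rw [step1]
    have hXc : X + conj X
        = ∑ k ∈ range M, (conj (A k) * g k + A k * conj (g k)) := by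
      rw [hXdef, map_sum, ← Finset.sum_add_distrib]
      refine Finset.sum_congr rfl fun k _ => ?_
      rw [map_mul, Complex.conj_conj]
    rw [hXc]
    have h2D : (2 : ℂ) * D
        = ∑ k ∈ range M, if k = 0 then conj (A k) * g k + A k * conj (g k) else 0 := by
      rw [Finset.sum_ite_eq' (range M) 0
        (fun k => conj (A k) * g k + A k * conj (g k))]
      rcases Nat.eq_zero_or_pos M with hM | hM
      · subst hM
        simp [hDdef]
      · rw [if_pos (Finset.mem_range.mpr hM), hg0]
        simp only [hAdef, if_pos rfl]
        rw [map_sum]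
        simp only [map_mul, Complex.conj_conj]
        rw [hDdef, Finset.mul_sum, Finset.sum_mul, Finset.sum_mul,
          ← Finset.sum_add_distrib]
        refine Finset.sum_congr rfl fun i _ => ?_
        ring
    rw [mul_add, h2D, mul_add, Finset.mul_sum, Finset.mul_sum,
      ← Finset.sum_add_distrib, ← Finset.sum_add_distrib]
    refine Finset.sum_congr rfl fun k _ => ?_
    rcases Nat.eq_zero_or_pos k with hk | hk
    · subst hk
      simp
    · rw [if_neg (by omega : ¬ k = 0), if_pos (show 1 ≤ k from hk), if_pos (show 1 ≤ k from hk), zero_add]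
      simp only [hAdef, if_neg (by omega : ¬ k = 0)]
      rw [map_mul, map_sum]
      simp only [map_mul, Complex.conj_conj, map_ofNat]
      rw [Finset.mul_sum, Finset.mul_sum, Finset.mul_sum, Finset.mul_sum,
        Finset.sum_mul, Finset.sum_mul, ← Finset.sum_add_distrib,
        ← Finset.sum_add_distrib]
      refine Finset.sum_congr rfl fun i _ => ?_
      ring
  have h2 : X + conj X = 2 * ((X.re : ℂ)) := by
    rw [Complex.add_conj]; push_cast; ring
  exact mul_left_cancel₀ two_ne_zero (key.trans h2)
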